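/- Every connected polyomino (finite edge-connected union of unit grid squares) of size at least 2 can be partitioned into elementary tiles of the following five shapes (up to rotation and reflection): the 2-domino (two cells in a row), the 3-domino (three cells in a row), the L-tromino, the T-tetromino, and the plus-pentomino. -/

import Mathlib

/-- Two unit cells of the grid `ℤ × ℤ` are adjacent if they differ by 1 in
exactly one coordinate. -/
def AdjCell (p q : ℤ × ℤ) : Prop :=
  (p.1 - q.1) ^ 2 + (p.2 - q.2) ^ 2 = 1

/-- A (finite) set of cells is a connected polyomino if any two of its cells are
joined by a path of adjacent cells staying inside the set. -/
def ConnectedPoly (S : Finset (ℤ × ℤ)) : Prop :=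
  ∀ p ∈ S, ∀ q ∈ S,
    Relation.ReflTransGen (fun a b => a ∈ S ∧ b ∈ S ∧ AdjCell a b) p q

/-- The eight symmetries of the square grid (rotations and reflections). -/
def dihedralMaps : List ((ℤ × ℤ) → (ℤ × ℤ)) :=
  [ fun p => (p.1, p.2), fun p => (-p.2, p.1), fun p => (-p.1, -p.2),
    fun p => (p.2, -p.1), fun p => (p.2, p.1), fun p => (-p.1, p.2),
    fun p => (p.1, -p.2), fun p => (-p.2, -p.1) ]

/-- `T` is congruent to `S` under translations, rotations and reflections. -/
def PolyCongruent (S T : Finset (ℤ × ℤ)) : Prop :=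
  ∃ f ∈ dihedralMaps, ∃ t : ℤ × ℤ, T = S.image fun p => t + f p

/-- The five elementary shapes: 2-domino, 3-domino, L-tromino, T-tetromino,
plus-pentomino. -/
def elementaryShapes : List (Finset (ℤ × ℤ)) :=
  [ {(0, 0), (1, 0)},
    {(0, 0), (1, 0), (2, 0)},
    {(0, 0), (1, 0), (1, 1)},
    {(1, 0), (0, 1), (1, 1), (2, 1)},
    {(1, 0), (0, 1), (1, 1), (2, 1), (1, 2)} ]

lemma adj_cases {p q : ℤ × ℤ} (h : AdjCell p q) :
    q = (p.1 + 1, p.2) ∨ q = (p.1 - 1, p.2) ∨ q = (p.1, p.2 + 1) ∨ q = (p.1, p.2 - 1) := by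
  unfold AdjCell at h
  obtain ⟨a, b⟩ := p
  obtain ⟨c, d⟩ := q
  simp only [Prod.mk.injEq]
  have h1 : a - c ≤ 1 := by nlinarith [sq_nonneg (b-d)]
  have h2 : -1 ≤ a - c := by nlinarith [sq_nonneg (b-d)]
  have h3 : b - d ≤ 1 := by nlinarith [sq_nonneg (a-c)]
  have h4 : -1 ≤ b - d := by nlinarith [sq_nonneg (a-c)]
  have e1 : a - c = 1 ∨ a - c = 0 ∨ a - c = -1 := by omega
  have e2 : b - d = 1 ∨ b - d = 0 ∨ b - d = -1 := by omega
  rcases e1 with e1|e1|e1 <;> rcases e2 with e2|e2|e2 <;> rw [e1, e2] at h <;>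
    norm_num at h <;> omega
set_option maxHeartbeats 2000000 in
lemma star_elementary (p : ℤ × ℤ) (C : Finset (ℤ × ℤ)) (hne : C.Nonempty)
    (hsub : ∀ q ∈ C, q = (p.1 + 1, p.2) ∨ q = (p.1 - 1, p.2) ∨ q = (p.1, p.2 + 1) ∨ q = (p.1, p.2 - 1)) :
    ∃ s ∈ elementaryShapes, PolyCongruent s (insert p C) := by
  by_cases hE : (p.1 + 1, p.2) ∈ C <;> by_cases hW : (p.1 - 1, p.2) ∈ C <;>
    by_cases hN : (p.1, p.2 + 1) ∈ C <;> by_cases hS : (p.1, p.2 - 1) ∈ C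
  · have hC : C = ({(p.1 + 1, p.2), (p.1 - 1, p.2), (p.1, p.2 + 1), (p.1, p.2 - 1)} : Finset (ℤ × ℤ)) := by
      ext x
      simp only [Finset.mem_insert, Finset.mem_singleton]
      constructor
      · intro hx
        rcases hsub x hx with rfl | rfl | rfl | rfl <;> first | simp_all | tauto
      · intro hx
        (try casesm* _ ∨ _) <;> subst_vars <;> assumption
    subst hC
    exact ⟨{(1,0),(0,1),(1,1),(2,1),(1,2)}, by unfold elementaryShapes; exact .tail _ (.tail _ (.tail _ (.tail _ (.head _)))), fun q => (q.1, q.2),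
      by unfold dihedralMaps; exact .head _,
      (p.1 - 1, p.2 - 1), by ext ⟨x, y⟩; simp [Prod.ext_iff]; try omega⟩
  · have hC : C = ({(p.1 + 1, p.2), (p.1 - 1, p.2), (p.1, p.2 + 1)} : Finset (ℤ × ℤ)) := by
      ext x
      simp only [Finset.mem_insert, Finset.mem_singleton]
      constructor
      · intro hx
        rcases hsub x hx with rfl | rfl | rfl | rfl <;> first | simp_all | tauto
      · intro hx
        (try casesm* _ ∨ _) <;> subst_vars <;> assumption
    subst hC
    exact ⟨{(1,0),(0,1),(1,1),(2,1)}, by unfold elementaryShapes; exact .tail _ (.tail _ (.tail _ (.head _))), fun q => (-q.1, -q.2),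
      by unfold dihedralMaps; exact .tail _ (.tail _ (.head _)),
      (p.1 + 1, p.2 + 1), by ext ⟨x, y⟩; simp [Prod.ext_iff]; try omega⟩
  · have hC : C = ({(p.1 + 1, p.2), (p.1 - 1, p.2), (p.1, p.2 - 1)} : Finset (ℤ × ℤ)) := by
      ext x
      simp only [Finset.mem_insert, Finset.mem_singleton]
      constructor
      · intro hx
        rcases hsub x hx with rfl | rfl | rfl | rfl <;> first | simp_all | tauto
      · intro hx
        (try casesm* _ ∨ _) <;> subst_vars <;> assumption
    subst hC
    exact ⟨{(1,0),(0,1),(1,1),(2,1)}, by unfold elementaryShapes; exact .tail _ (.tail _ (.tail _ (.head _))), fun q => (q.1, q.2),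
      by unfold dihedralMaps; exact .head _,
      (p.1 - 1, p.2 - 1), by ext ⟨x, y⟩; simp [Prod.ext_iff]; try omega⟩
  · have hC : C = ({(p.1 + 1, p.2), (p.1 - 1, p.2)} : Finset (ℤ × ℤ)) := by
      ext x
      simp only [Finset.mem_insert, Finset.mem_singleton]
      constructor
      · intro hx
        rcases hsub x hx with rfl | rfl | rfl | rfl <;> first | simp_all | tauto
      · intro hx
        (try casesm* _ ∨ _) <;> subst_vars <;> assumption
    subst hC
    exact ⟨{(0,0),(1,0),(2,0)}, by unfold elementaryShapes; exact .tail _ (.head _), fun q => (q.1, q.2),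
      by unfold dihedralMaps; exact .head _,
      (p.1 - 1, p.2 + 0), by ext ⟨x, y⟩; simp [Prod.ext_iff]; try omega⟩
  · have hC : C = ({(p.1 + 1, p.2), (p.1, p.2 + 1), (p.1, p.2 - 1)} : Finset (ℤ × ℤ)) := by
      ext x
      simp only [Finset.mem_insert, Finset.mem_singleton]
      constructor
      · intro hx
        rcases hsub x hx with rfl | rfl | rfl | rfl <;> first | simp_all | tauto
      · intro hx
        (try casesm* _ ∨ _) <;> subst_vars <;> assumption
    subst hC
    exact ⟨{(1,0),(0,1),(1,1),(2,1)}, by unfold elementaryShapes; exact .tail _ (.tail _ (.tail _ (.head _))), fun q => (-q.2, q.1),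
      by unfold dihedralMaps; exact .tail _ (.head _),
      (p.1 + 1, p.2 - 1), by ext ⟨x, y⟩; simp [Prod.ext_iff]; try omega⟩
  · have hC : C = ({(p.1 + 1, p.2), (p.1, p.2 + 1)} : Finset (ℤ × ℤ)) := by
      ext x
      simp only [Finset.mem_insert, Finset.mem_singleton]
      constructor
      · intro hx
        rcases hsub x hx with rfl | rfl | rfl | rfl <;> first | simp_all | tauto
      · intro hx
        (try casesm* _ ∨ _) <;> subst_vars <;> assumption
    subst hC
    exact ⟨{(0,0),(1,0),(1,1)}, by unfold elementaryShapes; exact .tail _ (.tail _ (.head _)), fun q => (q.2, -q.1),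
      by unfold dihedralMaps; exact .tail _ (.tail _ (.tail _ (.head _))),
      (p.1 + 0, p.2 + 1), by ext ⟨x, y⟩; simp [Prod.ext_iff]; try omega⟩
  · have hC : C = ({(p.1 + 1, p.2), (p.1, p.2 - 1)} : Finset (ℤ × ℤ)) := by
      ext x
      simp only [Finset.mem_insert, Finset.mem_singleton]
      constructor
      · intro hx
        rcases hsub x hx with rfl | rfl | rfl | rfl <;> first | simp_all | tauto
      · intro hx
        (try casesm* _ ∨ _) <;> subst_vars <;> assumption
    subst hC
    exact ⟨{(0,0),(1,0),(1,1)}, by unfold elementaryShapes; exact .tail _ (.tail _ (.head _)), fun q => (-q.1, -q.2),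
      by unfold dihedralMaps; exact .tail _ (.tail _ (.head _)),
      (p.1 + 1, p.2 + 0), by ext ⟨x, y⟩; simp [Prod.ext_iff]; try omega⟩
  · have hC : C = ({(p.1 + 1, p.2)} : Finset (ℤ × ℤ)) := by
      ext x
      simp only [Finset.mem_insert, Finset.mem_singleton]
      constructor
      · intro hx
        rcases hsub x hx with rfl | rfl | rfl | rfl <;> first | simp_all | tauto
      · intro hx
        (try casesm* _ ∨ _) <;> subst_vars <;> assumption
    subst hC
    exact ⟨{(0,0),(1,0)}, by unfold elementaryShapes; exact .head _, fun q => (q.1, q.2),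
      by unfold dihedralMaps; exact .head _,
      (p.1 + 0, p.2 + 0), by ext ⟨x, y⟩; simp [Prod.ext_iff]; try omega⟩
  · have hC : C = ({(p.1 - 1, p.2), (p.1, p.2 + 1), (p.1, p.2 - 1)} : Finset (ℤ × ℤ)) := by
      ext x
      simp only [Finset.mem_insert, Finset.mem_singleton]
      constructor
      · intro hx
        rcases hsub x hx with rfl | rfl | rfl | rfl <;> first | simp_all | tauto
      · intro hx
        (try casesm* _ ∨ _) <;> subst_vars <;> assumption
    subst hC
    exact ⟨{(1,0),(0,1),(1,1),(2,1)}, by unfold elementaryShapes; exact .tail _ (.tail _ (.tail _ (.head _))), fun q => (q.2, -q.1),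
      by unfold dihedralMaps; exact .tail _ (.tail _ (.tail _ (.head _))),
      (p.1 - 1, p.2 + 1), by ext ⟨x, y⟩; simp [Prod.ext_iff]; try omega⟩
  · have hC : C = ({(p.1 - 1, p.2), (p.1, p.2 + 1)} : Finset (ℤ × ℤ)) := by
      ext x
      simp only [Finset.mem_insert, Finset.mem_singleton]
      constructor
      · intro hx
        rcases hsub x hx with rfl | rfl | rfl | rfl <;> first | simp_all | tauto
      · intro hx
        (try casesm* _ ∨ _) <;> subst_vars <;> assumption
    subst hC
    exact ⟨{(0,0),(1,0),(1,1)}, by unfold elementaryShapes; exact .tail _ (.tail _ (.head _)), fun q => (q.1, q.2),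
      by unfold dihedralMaps; exact .head _,
      (p.1 - 1, p.2 + 0), by ext ⟨x, y⟩; simp [Prod.ext_iff]; try omega⟩
  · have hC : C = ({(p.1 - 1, p.2), (p.1, p.2 - 1)} : Finset (ℤ × ℤ)) := by
      ext x
      simp only [Finset.mem_insert, Finset.mem_singleton]
      constructor
      · intro hx
        rcases hsub x hx with rfl | rfl | rfl | rfl <;> first | simp_all | tauto
      · intro hx
        (try casesm* _ ∨ _) <;> subst_vars <;> assumption
    subst hC
    exact ⟨{(0,0),(1,0),(1,1)}, by unfold elementaryShapes; exact .tail _ (.tail _ (.head _)), fun q => (-q.2, q.1),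
      by unfold dihedralMaps; exact .tail _ (.head _),
      (p.1 + 0, p.2 - 1), by ext ⟨x, y⟩; simp [Prod.ext_iff]; try omega⟩
  · have hC : C = ({(p.1 - 1, p.2)} : Finset (ℤ × ℤ)) := by
      ext x
      simp only [Finset.mem_insert, Finset.mem_singleton]
      constructor
      · intro hx
        rcases hsub x hx with rfl | rfl | rfl | rfl <;> first | simp_all | tauto
      · intro hx
        (try casesm* _ ∨ _) <;> subst_vars <;> assumption
    subst hC
    exact ⟨{(0,0),(1,0)}, by unfold elementaryShapes; exact .head _, fun q => (q.1, q.2),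
      by unfold dihedralMaps; exact .head _,
      (p.1 - 1, p.2 + 0), by ext ⟨x, y⟩; simp [Prod.ext_iff]; try omega⟩
  · have hC : C = ({(p.1, p.2 + 1), (p.1, p.2 - 1)} : Finset (ℤ × ℤ)) := by
      ext x
      simp only [Finset.mem_insert, Finset.mem_singleton]
      constructor
      · intro hx
        rcases hsub x hx with rfl | rfl | rfl | rfl <;> first | simp_all | tauto
      · intro hx
        (try casesm* _ ∨ _) <;> subst_vars <;> assumption
    subst hC
    exact ⟨{(0,0),(1,0),(2,0)}, by unfold elementaryShapes; exact .tail _ (.head _), fun q => (-q.2, q.1),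
      by unfold dihedralMaps; exact .tail _ (.head _),
      (p.1 + 0, p.2 - 1), by ext ⟨x, y⟩; simp [Prod.ext_iff]; try omega⟩
  · have hC : C = ({(p.1, p.2 + 1)} : Finset (ℤ × ℤ)) := by
      ext x
      simp only [Finset.mem_insert, Finset.mem_singleton]
      constructor
      · intro hx
        rcases hsub x hx with rfl | rfl | rfl | rfl <;> first | simp_all | tauto
      · intro hx
        (try casesm* _ ∨ _) <;> subst_vars <;> assumption
    subst hC
    exact ⟨{(0,0),(1,0)}, by unfold elementaryShapes; exact .head _, fun q => (-q.2, q.1),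
      by unfold dihedralMaps; exact .tail _ (.head _),
      (p.1 + 0, p.2 + 0), by ext ⟨x, y⟩; simp [Prod.ext_iff]; try omega⟩
  · have hC : C = ({(p.1, p.2 - 1)} : Finset (ℤ × ℤ)) := by
      ext x
      simp only [Finset.mem_insert, Finset.mem_singleton]
      constructor
      · intro hx
        rcases hsub x hx with rfl | rfl | rfl | rfl <;> first | simp_all | tauto
      · intro hx
        (try casesm* _ ∨ _) <;> subst_vars <;> assumption
    subst hC
    exact ⟨{(0,0),(1,0)}, by unfold elementaryShapes; exact .head _, fun q => (-q.2, q.1),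
      by unfold dihedralMaps; exact .tail _ (.head _),
      (p.1 + 0, p.2 - 1), by ext ⟨x, y⟩; simp [Prod.ext_iff]; try omega⟩
  · exfalso
    obtain ⟨x, hx⟩ := hne
    rcases hsub x hx with rfl | rfl | rfl | rfl <;> tauto

lemma adj_symm {p q : ℤ × ℤ} (h : AdjCell p q) : AdjCell q p := by
  unfold AdjCell at *; ring_nf at *; linarith

private def Steps (S : Finset (ℤ × ℤ)) : ℕ → (ℤ × ℤ) → (ℤ × ℤ) → Prop
  | 0 => fun p q => p = q
  | n+1 => fun p q => ∃ m, Steps S n p m ∧ m ∈ S ∧ q ∈ S ∧ AdjCell m q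

lemma exists_piece (S : Finset (ℤ × ℤ)) (hconn : ConnectedPoly S) (hcard : 2 ≤ S.card) :
    ∃ P : Finset (ℤ × ℤ), P ⊆ S ∧ P.Nonempty ∧ (∃ s ∈ elementaryShapes, PolyCongruent s P) ∧
      (S \ P = ∅ ∨ (2 ≤ (S \ P).card ∧ ConnectedPoly (S \ P))) := by
  classical
  obtain ⟨r, hr⟩ : S.Nonempty := Finset.card_pos.mp (by omega)
  set d : (ℤ × ℤ) → ℕ := fun q => sInf {n | Steps S n r q} with hd
  have hreach : ∀ q, Relation.ReflTransGen (fun a b => a ∈ S ∧ b ∈ S ∧ AdjCell a b) r q →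
      ∃ n, Steps S n r q := by
    intro q h
    induction h with
    | refl => exact ⟨0, rfl⟩
    | tail _ h2 ih =>
        obtain ⟨n, hn⟩ := ih
        exact ⟨n+1, _, hn, h2.1, h2.2.1, h2.2.2⟩
  have hdle : ∀ q n, Steps S n r q → d q ≤ n := fun q n h => Nat.sInf_le h
  have hdstep : ∀ q ∈ S, Steps S (d q) r q := fun q hq =>
    Nat.sInf_mem (hreach q (hconn r hr q hq))
  have hdr : d r = 0 := Nat.le_zero.mp (hdle r 0 rfl)
  have hdzero : ∀ q ∈ S, d q = 0 → q = r := by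
    intro q hq h0
    have hs := hdstep q hq
    rw [h0] at hs
    exact (show r = q from hs).symm
  have hparent : ∀ q ∈ S, d q ≠ 0 → ∃ m ∈ S, AdjCell m q ∧ d m + 1 = d q := by
    intro q hq h0
    have hs := hdstep q hq
    rcases hk : d q with _ | k
    · exact absurd hk h0
    · rw [hk] at hs
      obtain ⟨m, hm1, hm2, hm3, hm4⟩ := hs
      refine ⟨m, hm2, hm4, ?_⟩
      have h1 : d m ≤ k := hdle m k hm1
      have h2 : d q ≤ d m + 1 := hdle q _ ⟨m, hdstep m hm2, hm2, hm3, hm4⟩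
      omega
  obtain ⟨u, hu, humax⟩ := Finset.exists_max_image S d ⟨r, hr⟩
  by_cases hD : d u ≤ 1
  · -- the whole polyomino is a star around r
    refine ⟨S, Finset.Subset.refl S, ⟨r, hr⟩, ?_, Or.inl (Finset.sdiff_self S)⟩
    have hS : S = insert r (S.erase r) := (Finset.insert_erase hr).symm
    rw [hS]
    apply star_elementary
    · rw [← Finset.card_pos, Finset.card_erase_of_mem hr]; omega
    · intro q hq
      have hqS : q ∈ S := Finset.mem_of_mem_erase hq
      have hqr : q ≠ r := Finset.ne_of_mem_erase hq
      have h0 : d q ≠ 0 := fun h => hqr (hdzero q hqS h)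
      have hle : d q ≤ d u := humax q hqS
      have h1 : d q = 1 := by omega
      have hs := hdstep q hqS
      rw [h1] at hs
      obtain ⟨m, hm0, -, -, hadj⟩ := hs
      obtain rfl := (show r = m from hm0)
      exact adj_cases hadj
  · -- deep case : remove a star around p, the parent of a deepest cell u
    have hDu : 2 ≤ d u := by omega
    obtain ⟨p, hpS, hpadj, hpd⟩ := hparent u hu (by omega)
    obtain ⟨g, hgS, hgadj, hgd⟩ := hparent p hpS (by omega)
    set C := S.filter (fun q => AdjCell p q ∧ d q = d u) with hC
    set P := insert p C with hP
    have hCsub : ∀ q ∈ C, q ∈ S ∧ AdjCell p q ∧ d q = d u := by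
      intro q hq
      rw [hC, Finset.mem_filter] at hq
      exact ⟨hq.1, hq.2⟩
    have hPs : P ⊆ S := Finset.insert_subset hpS (Finset.filter_subset _ S)
    have huC : u ∈ C := by
      rw [hC, Finset.mem_filter]
      exact ⟨hu, hpadj, rfl⟩
    have elem : ∃ s ∈ elementaryShapes, PolyCongruent s P :=
      star_elementary p C ⟨u, huC⟩ (fun q hq => adj_cases (hCsub q hq).2.1)
    have hgP : g ∉ P := by
      rw [hP, Finset.mem_insert]
      rintro (rfl | hgC)
      · omega
      · have := (hCsub g hgC).2.2
        omega
    have hrP : r ∉ P := by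
      rw [hP, Finset.mem_insert]
      rintro (rfl | hrC)
      · omega
      · have := (hCsub r hrC).2.2
        omega
    by_cases hsmall : S \ P ⊆ {r}
    · -- the whole polyomino is a star around p
      have hgr : g = r := by
        have hm : g ∈ S \ P := Finset.mem_sdiff.mpr ⟨hgS, hgP⟩
        exact Finset.mem_singleton.mp (hsmall hm)
      have hSP : S = insert p (insert r C) := by
        ext x
        simp only [Finset.mem_insert]
        constructor
        · intro hx
          by_cases hxP : x ∈ P
          · rw [hP, Finset.mem_insert] at hxP
            rcases hxP with rfl | h
            · exact Or.inl rfl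
            · exact Or.inr (Or.inr h)
          · have : x ∈ S \ P := Finset.mem_sdiff.mpr ⟨hx, hxP⟩
            exact Or.inr (Or.inl (Finset.mem_singleton.mp (hsmall this)))
        · rintro (rfl | rfl | hx)
          · exact hpS
          · exact hr
          · exact (hCsub x hx).1
      refine ⟨S, Finset.Subset.refl S, ⟨r, hr⟩, ?_, Or.inl (Finset.sdiff_self S)⟩
      rw [hSP]
      apply star_elementary
      · exact ⟨r, Finset.mem_insert_self r C⟩
      · intro q hq
        rcases Finset.mem_insert.mp hq with rfl | hqC
        · rw [← hgr]
          exact adj_cases (adj_symm hgadj)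
        · exact adj_cases (hCsub q hqC).2.1
    · -- remove the star P
      obtain ⟨q0, hq01, hq02⟩ : ∃ q0 ∈ S \ P, q0 ∉ ({r} : Finset (ℤ × ℤ)) :=
        Finset.not_subset.mp hsmall
      rw [Finset.mem_singleton] at hq02
      refine ⟨P, hPs, ⟨p, Finset.mem_insert_self p C⟩, elem, Or.inr ⟨?_, ?_⟩⟩
      · exact Finset.one_lt_card.mpr ⟨r, Finset.mem_sdiff.mpr ⟨hr, hrP⟩, q0, hq01, (Ne.symm hq02)⟩
      · have key : ∀ n, ∀ q ∈ S \ P, d q ≤ n →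
            Relation.ReflTransGen (fun a b => a ∈ S \ P ∧ b ∈ S \ P ∧ AdjCell a b) q r := by
          intro n
          induction n with
          | zero =>
              intro q hq hdq
              have : q = r := hdzero q (Finset.mem_sdiff.mp hq).1 (by omega)
              subst this
              exact Relation.ReflTransGen.refl
          | succ n ih =>
              intro q hq hdq
              have hqS : q ∈ S := (Finset.mem_sdiff.mp hq).1
              by_cases h0 : d q = 0
              · have : q = r := hdzero q hqS h0
                subst this
                exact Relation.ReflTransGen.refl
              · obtain ⟨m, hmS, hmadj, hmd⟩ := hparent q hqS h0
                have hmP : m ∉ P := by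
                  rw [hP, Finset.mem_insert]
                  rintro (rfl | hmC)
                  · have hq' : q ∈ C := by
                      rw [hC, Finset.mem_filter]
                      refine ⟨hqS, hmadj, ?_⟩
                      have := humax q hqS
                      omega
                    exact (Finset.mem_sdiff.mp hq).2 (Finset.mem_insert_of_mem hq')
                  · have h1 := (hCsub m hmC).2.2
                    have h2 := humax q hqS
                    omega
                have ihm := ih m (Finset.mem_sdiff.mpr ⟨hmS, hmP⟩) (by omega)
                exact Relation.ReflTransGen.head
                  ⟨hq, Finset.mem_sdiff.mpr ⟨hmS, hmP⟩, adj_symm hmadj⟩ ihm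
        intro a ha b hb
        have h1 := key (d a) a ha le_rfl
        have h2 := key (d b) b hb le_rfl
        have hsymm : Symmetric (fun a b => a ∈ S \ P ∧ b ∈ S \ P ∧ AdjCell a b) :=
          fun x y ⟨u1, u2, u3⟩ => ⟨u2, u1, adj_symm u3⟩
        exact h1.trans ((@Relation.ReflTransGen.stdSymm _ _ ⟨hsymm⟩).symm _ _ h2)

lemma decomp_aux : ∀ n (S : Finset (ℤ × ℤ)), S.card ≤ n → ConnectedPoly S → 2 ≤ S.card →
    ∃ Part : Finset (Finset (ℤ × ℤ)),
      (Part : Set (Finset (ℤ × ℤ))).PairwiseDisjoint id ∧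
      Part.sup id = S ∧
      ∀ t ∈ Part, ∃ s ∈ elementaryShapes, PolyCongruent s t := by
  intro n
  induction n with
  | zero => intro S h _ h2; omega
  | succ n ih =>
    intro S hle hconn hcard
    obtain ⟨P, hPS, hPne, hPel, hrest⟩ := exists_piece S hconn hcard
    rcases hrest with h0 | ⟨h2, hconn'⟩
    · have hPeq : P = S :=
        Finset.Subset.antisymm hPS (Finset.sdiff_eq_empty_iff_subset.mp h0)
      refine ⟨{P}, ?_, ?_, ?_⟩
      · simp only [Finset.coe_singleton]
        exact Set.pairwiseDisjoint_singleton P id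
      · simp [hPeq]
      · intro t ht
        rw [Finset.mem_singleton] at ht
        subst ht
        exact hPel
    · have hcard' : (S \ P).card ≤ n := by
        have e1 := Finset.card_sdiff_of_subset hPS
        have e2 := Finset.card_pos.mpr hPne
        have e3 := Finset.card_le_card hPS
        omega
      obtain ⟨Part', hdisj, hsup, hshapes⟩ := ih (S \ P) hcard' hconn' h2
      have hPnotin : ∀ t ∈ Part', Disjoint P t := by
        intro t ht
        have htsub : t ⊆ S \ P := by
          have h := Finset.le_sup (f := id) ht
          rw [hsup] at h
          exact h
        exact Finset.disjoint_sdiff.mono_right htsub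
      refine ⟨insert P Part', ?_, ?_, ?_⟩
      · rw [Finset.coe_insert]
        exact hdisj.insert (fun t ht _ => hPnotin t ht)
      · rw [Finset.sup_insert, hsup]
        exact Finset.union_sdiff_of_subset hPS
      · intro t ht
        rcases Finset.mem_insert.mp ht with rfl | h
        · exact hPel
        · exact hshapes t h

/-- Every connected polyomino of size at least 2 can be partitioned into pieces,
each congruent to one of the five elementary shapes. -/
theorem polyomino_decomposition (S : Finset (ℤ × ℤ))
    (hconn : ConnectedPoly S) (hcard : 2 ≤ S.card) :
    ∃ Part : Finset (Finset (ℤ × ℤ)),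
      (Part : Set (Finset (ℤ × ℤ))).PairwiseDisjoint id ∧
      Part.sup id = S ∧
      ∀ t ∈ Part, ∃ s ∈ elementaryShapes, PolyCongruent s t := by
  exact decomp_aux S.card S le_rfl hconn hcard
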